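/- arXiv:1810.05982 — 12 statements merged into one kernel-verified Lean document; each statement's English description precedes it below -/
import Mathlib

section
/- Let f : x → S(x) be a function into the permutations of x, and let g be a function assigning to each t in the range of f a permutation g(t) of x such that the set of points moved by g(t) is nonempty and contained in the fiber f⁻¹({t}). Then there exists a permutation u of x that is not in the range of f. -/
/-- Cantor's theorem for the set of permutations: if `f : x → S(x)` and `g` assigns to
each `t` in the range of `f` a permutation whose moved set is nonempty and contained in
the fiber `f⁻¹ {t}`, then some permutation of `x` is not in the range of `f`. -/
theorem perm_not_in_range {x : Type*} (f : x → Equiv.Perm x) (g : Equiv.Perm x → Equiv.Perm x)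
    (h : ∀ t ∈ Set.range f, ({z | g t z ≠ z}).Nonempty ∧ {z | g t z ≠ z} ⊆ f ⁻¹' {t}) :
    ∃ u : Equiv.Perm x, u ∉ Set.range f := by
  classical
  -- the canonical fiberwise permutation `g (f z)` preserves fibers of `f`
  have hg : ∀ z : x, f (g (f z) z) = f z := by
    intro z
    by_cases hz : g (f z) z = z
    · rw [hz]
    · have hm : g (f z) (g (f z) z) ≠ g (f z) z :=
        fun he => hz ((g (f z)).injective he)
      exact (h (f z) ⟨z, rfl⟩).2 hm
  have hg' : ∀ z : x, f ((g (f z)).symm z) = f z := by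
    intro z
    by_cases hz : (g (f z)).symm z = z
    · rw [hz]
    · have hm : g (f z) ((g (f z)).symm z) ≠ (g (f z)).symm z := by
        rw [Equiv.apply_symm_apply]
        exact fun he => hz he.symm
      exact (h (f z) ⟨z, rfl⟩).2 hm
  -- `C t` : the permutation `t` preserves the fiber `f ⁻¹' {t}`
  set C : Equiv.Perm x → Prop :=
    fun t => ∀ z, f z = t → f (t z) = t ∧ f (t.symm z) = t with hCdef
  set F : x → x := fun z => if C (f z) then (f z) (g (f z) z) else g (f z) z with hFdef
  set G : x → x :=
    fun z => if C (f z) then (g (f z)).symm ((f z).symm z) else (g (f z)).symm z with hGdef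
  have hFf : ∀ z, f (F z) = f z := by
    intro z
    by_cases hc : C (f z)
    · simp only [hFdef, if_pos hc]
      exact (hc (g (f z) z) (hg z)).1
    · simp only [hFdef, if_neg hc]
      exact hg z
  have hGf : ∀ z, f (G z) = f z := by
    intro z
    by_cases hc : C (f z)
    · simp only [hGdef, if_pos hc]
      have hw : f ((f z).symm z) = f z := (hc z rfl).2
      have := hg' ((f z).symm z)
      rwa [hw] at this
    · simp only [hGdef, if_neg hc]
      exact hg' z
  have hl : Function.LeftInverse G F := by
    intro z
    have hfz : f (F z) = f z := hFf z
    by_cases hc : C (f z)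
    · have h1 : G (F z) = (g (f z)).symm ((f z).symm (F z)) := by
        simp only [hGdef, hfz, if_pos hc]
      rw [h1]
      have h2 : F z = (f z) (g (f z) z) := by simp only [hFdef, if_pos hc]
      rw [h2, Equiv.symm_apply_apply, Equiv.symm_apply_apply]
    · have h1 : G (F z) = (g (f z)).symm (F z) := by
        simp only [hGdef, hfz, if_neg hc]
      have h2 : F z = g (f z) z := by simp only [hFdef, if_neg hc]
      rw [h1, h2, Equiv.symm_apply_apply]
  have hr : Function.RightInverse G F := by
    intro z
    have hfz : f (G z) = f z := hGf z
    by_cases hc : C (f z)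
    · have h1 : F (G z) = (f z) (g (f z) (G z)) := by
        simp only [hFdef, hfz, if_pos hc]
      have h2 : G z = (g (f z)).symm ((f z).symm z) := by simp only [hGdef, if_pos hc]
      rw [h1, h2, Equiv.apply_symm_apply, Equiv.apply_symm_apply]
    · have h1 : F (G z) = g (f z) (G z) := by
        simp only [hFdef, hfz, if_neg hc]
      have h2 : G z = (g (f z)).symm z := by simp only [hGdef, if_neg hc]
      rw [h1, h2, Equiv.apply_symm_apply]
  refine ⟨⟨F, G, hl, hr⟩, ?_⟩
  rintro ⟨a, ha⟩
  have hcoe : ∀ z, (f a) z = F z := by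
    intro z; rw [ha]; rfl
  have hcoe' : ∀ z, (f a).symm z = G z := by
    intro z; rw [ha]; rfl
  have hC : C (f a) := by
    intro z hz
    constructor
    · rw [hcoe z, hFf z, hz]
    · rw [hcoe' z, hGf z, hz]
  obtain ⟨w, hw⟩ := (h (f a) ⟨a, rfl⟩).1
  have hw' : g (f a) w ≠ w := hw
  have hfw : f w = f a := (h (f a) ⟨a, rfl⟩).2 hw
  have hFw : F w = (f a) (g (f a) w) := by
    simp only [hFdef, hfw, if_pos hC]
  have : (f a) w = (f a) (g (f a) w) := by rw [hcoe w, hFw]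
  exact hw' ((f a).injective this.symm)
end

section
/- For every set x disjoint from ω, there is an injection from seq(x), the set of all finite sequences over x, into seq¹⁻¹(x ∪ ω), the set of all injective finite sequences over x ∪ ω. The injection sends a sequence t to the sequence f(t) defined on the same domain by f(t)(n) = t(n) if t(n) differs from all earlier values, and f(t)(n) = max{k < n | t(k) = t(n)} otherwise. -/
open Classical in
noncomputable def seqStepAux {x : Type*} (t : List x) (n : ℕ) (h : n < t.length) : x ⊕ ℕ :=
  if ∃ k < n, t[k]? = some t[n] then
    Sum.inr (Nat.findGreatest (fun k => t[k]? = some t[n]) (n - 1))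
  else Sum.inl t[n]

open Classical in
noncomputable def seqEnc {x : Type*} (t : List x) : List (x ⊕ ℕ) :=
  List.ofFn fun i : Fin t.length => seqStepAux t i.1 i.2

open Classical in
lemma seqStepAux_cases {x : Type*} (t : List x) (n : ℕ) (h : n < t.length) :
    (seqStepAux t n h = Sum.inl t[n] ∧ ∀ k < n, t[k]? ≠ some t[n]) ∨
    (seqStepAux t n h =
        Sum.inr (Nat.findGreatest (fun k => t[k]? = some t[n]) (n - 1)) ∧
      ∃ k < n, t[k]? = some t[n]) := by
  unfold seqStepAux
  by_cases hc : ∃ k < n, t[k]? = some t[n]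
  · right; refine ⟨by simp [hc], hc⟩
  · left
    refine ⟨by simp [hc], ?_⟩
    intro k hk hne
    exact hc ⟨k, hk, hne⟩

open Classical in
lemma seqStepAux_inr {x : Type*} (t : List x) (n : ℕ) (h : n < t.length) (j : ℕ)
    (hj : seqStepAux t n h = Sum.inr j) :
    j < n ∧ t[j]? = some t[n] ∧ ∀ k, j < k → k < n → t[k]? ≠ some t[n] := by
  rcases seqStepAux_cases t n h with ⟨he, _⟩ | ⟨he, k, hk, hpk⟩
  · rw [he] at hj; simp at hj
  · rw [he] at hj
    obtain rfl : Nat.findGreatest (fun k => t[k]? = some t[n]) (n - 1) = j := by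
      simpa using hj
    have hn1 : 1 ≤ n := Nat.one_le_iff_ne_zero.mpr (by rintro rfl; omega)
    have hkle : k ≤ n - 1 := by omega
    refine ⟨?_, Nat.findGreatest_spec (P := fun k => t[k]? = some t[n]) hkle hpk, ?_⟩
    · have := Nat.findGreatest_le (P := fun k => t[k]? = some t[n]) (n - 1)
      omega
    · intro m hm1 hm2
      exact Nat.findGreatest_is_greatest hm1 (by omega)

open Classical in
lemma seqStepAux_inl {x : Type*} (t : List x) (n : ℕ) (h : n < t.length) (a : x)
    (hj : seqStepAux t n h = Sum.inl a) :
    a = t[n] ∧ ∀ k < n, t[k]? ≠ some t[n] := by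
  rcases seqStepAux_cases t n h with ⟨he, hne⟩ | ⟨he, _⟩
  · rw [he] at hj; exact ⟨(by simpa using hj.symm), hne⟩
  · rw [he] at hj; simp at hj

lemma seqEnc_length {x : Type*} (t : List x) : (seqEnc t).length = t.length := by
  simp [seqEnc]

open Classical in
lemma seqEnc_getElem {x : Type*} (t : List x) (n : ℕ) (h : n < t.length) :
    (seqEnc t)[n]'(by simpa [seqEnc_length]) = seqStepAux t n h := by
  simp [seqEnc, List.getElem_ofFn]

open Classical in
lemma seqEnc_nodup {x : Type*} (t : List x) : (seqEnc t).Nodup := by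
  rw [seqEnc, List.nodup_ofFn]
  intro i j hij'
  have hij : seqStepAux t i.1 i.2 = seqStepAux t j.1 j.2 := hij'
  rcases lt_trichotomy i.1 j.1 with hlt | heq | hlt
  · exfalso
    rcases seqStepAux_cases t j.1 j.2 with ⟨hej, hnej⟩ | ⟨hej, _⟩
    · -- j is inl, so i's step = inl t[j], so t[i] = t[j], contradiction with hnej
      rw [hej] at hij
      rcases seqStepAux_inl t i.1 i.2 _ hij with ⟨hti, _⟩
      exact hnej i.1 hlt (by rw [List.getElem?_eq_getElem i.2, hti])
    · rw [hej] at hij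
      rcases seqStepAux_inr t i.1 i.2 _ hij with ⟨hlt2, hji, _⟩
      -- j0 := findGreatest ... < i, t[j0]? = some t[i], and P j holds? need t[i] = t[j]
      set j0 := Nat.findGreatest (fun k => t[k]? = some t[j.1]) (j.1 - 1) with hj0
      have hpj0 : t[j0]? = some t[j.1] := by
        rcases seqStepAux_cases t j.1 j.2 with ⟨he, _⟩ | ⟨_, k, hk, hpk⟩
        · rw [he] at hej; simp at hej
        · rw [hj0]; exact Nat.findGreatest_spec (P := fun k => t[k]? = some t[j.1]) (m := k) (n := j.1 - 1) (by omega) hpk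
      have htij : t[i.1] = t[j.1] := by
        rw [hji] at hpj0; simpa using hpj0
      -- then i ≤ j0 via le_findGreatest since P i : t[i]? = some t[j]
      have : i.1 ≤ j0 := Nat.le_findGreatest (m := i.1) (n := j.1 - 1) (by omega)
        (by rw [List.getElem?_eq_getElem i.2, htij])
      omega
  · exact Fin.ext heq
  · exfalso
    rcases seqStepAux_cases t i.1 i.2 with ⟨hej, hnej⟩ | ⟨hej, _⟩
    · rw [hej] at hij
      rcases seqStepAux_inl t j.1 j.2 _ hij.symm with ⟨hti, _⟩
      exact hnej j.1 hlt (by rw [List.getElem?_eq_getElem j.2, hti])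
    · rw [hej] at hij
      rcases seqStepAux_inr t j.1 j.2 _ hij.symm with ⟨hlt2, hji, _⟩
      set j0 := Nat.findGreatest (fun k => t[k]? = some t[i.1]) (i.1 - 1) with hj0
      have hpj0 : t[j0]? = some t[i.1] := by
        rcases seqStepAux_cases t i.1 i.2 with ⟨he, _⟩ | ⟨_, k, hk, hpk⟩
        · rw [he] at hej; simp at hej
        · rw [hj0]; exact Nat.findGreatest_spec (P := fun k => t[k]? = some t[i.1]) (m := k) (n := i.1 - 1) (by omega) hpk
      have htij : t[j.1] = t[i.1] := by
        rw [hji] at hpj0; simpa using hpj0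
      have : j.1 ≤ j0 := Nat.le_findGreatest (m := j.1) (n := i.1 - 1) (by omega)
        (by rw [List.getElem?_eq_getElem j.2, htij])
      omega

open Classical in
lemma seqEnc_injective {x : Type*} : Function.Injective (seqEnc (x := x)) := by
  intro t s hts
  have hlen : t.length = s.length := by
    have := congrArg List.length hts
    simpa [seqEnc_length] using this
  have key : ∀ n (h : n < t.length), t[n] = s[n]'(by omega) := by
    intro n
    induction n using Nat.strong_induction_on with
    | _ n ih =>
      intro h
      have hs : n < s.length := by omega
      have hst : seqStepAux t n h = seqStepAux s n hs := by
        rw [← seqEnc_getElem t n h, ← seqEnc_getElem s n hs]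
        exact List.getElem_of_eq hts _
      rcases seqStepAux_cases t n h with ⟨he, _⟩ | ⟨he, k, hk, hpk⟩
      · rw [he] at hst
        rcases seqStepAux_inl s n hs _ hst.symm with ⟨ha, _⟩
        exact ha
      · rw [he] at hst
        rcases seqStepAux_inr s n hs _ hst.symm with ⟨hjn, hjs, _⟩
        set j := Nat.findGreatest (fun k => t[k]? = some t[n]) (n - 1) with hj
        have hjt : t[j]? = some t[n] := by
          rw [hj]; exact Nat.findGreatest_spec (P := fun k => t[k]? = some t[n]) (m := k) (n := n - 1) (by omega) hpk
        have hjlt : j < t.length := by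
          rcases List.getElem?_eq_some_iff.mp hjt with ⟨h', _⟩; exact h'
        have hjeq : t[j] = s[j]'(by omega) := ih j hjn hjlt
        rw [List.getElem?_eq_getElem hjlt] at hjt
        rw [List.getElem?_eq_getElem (by omega : j < s.length)] at hjs
        have h1 : t[n] = t[j] := by injection hjt.symm
        have h2 : s[j]'(by omega) = s[n]'hs := by injection hjs
        rw [h1, hjeq, h2]
  exact List.ext_getElem hlen (fun n h1 h2 => key n h1)

open Classical in
/-- There is an injection from finite sequences over `x` into injective finite sequences
over `x ⊕ ω`, sending `t` to the sequence of the same length whose `n`-th entry is `t n`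
(as an element of `x`) if `t n` differs from all earlier values, and is the natural number
`max {k < n | t k = t n}` otherwise. -/
theorem seq_into_injective_seq_sum {x : Type*} :
    ∃ f : List x → {l : List (x ⊕ ℕ) // l.Nodup},
      Function.Injective f ∧
      ∀ t : List x,
        (f t).val.length = t.length ∧
        ∀ (n : ℕ) (a : x), t[n]? = some a →
          ((∀ k < n, t[k]? ≠ some a) → (f t).val[n]? = some (Sum.inl a)) ∧
          ((∃ k < n, t[k]? = some a) →
            (f t).val[n]? =
              some (Sum.inr (Nat.findGreatest (fun k => t[k]? = some a) (n - 1)))) := by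
  refine ⟨fun t => ⟨seqEnc t, seqEnc_nodup t⟩, ?_, ?_⟩
  · intro t s h
    exact seqEnc_injective (congrArg Subtype.val h)
  · intro t
    refine ⟨seqEnc_length t, ?_⟩
    intro n a hna
    rcases List.getElem?_eq_some_iff.mp hna with ⟨hn, hta⟩
    have hget : (seqEnc t)[n]? = some (seqStepAux t n hn) := by
      rw [List.getElem?_eq_getElem (by simpa [seqEnc_length] : n < (seqEnc t).length)]
      rw [seqEnc_getElem]
    constructor
    · intro hne
      rcases seqStepAux_cases t n hn with ⟨he, _⟩ | ⟨he, k, hk, hpk⟩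
      · rw [hget, he, hta]
      · exact absurd (hta ▸ hpk) (hne k hk)
    · rintro ⟨k, hk, hpk⟩
      rcases seqStepAux_cases t n hn with ⟨he, hne⟩ | ⟨he, _⟩
      · exact absurd (hta ▸ hpk) (hne k hk)
      · rw [hget, he, hta]
end

section
/- For every nonempty set x, there is an injection from seq¹⁻¹(x ∪ ω) into ω × seq¹⁻¹(x); consequently |seq(x)| = |ω × seq¹⁻¹(x)| (using the previous injection and Cantor–Bernstein). -/
/-!
An injective list over `α ⊕ β` is determined by its shape `l.map Sum.getRight?`, which records
the `β`-entries and the positions of the `α`-entries (and is coded by one natural number when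
`β` is countable), together with the list of its `α`-entries, which is again injective.

For the bijection, `α ↪ seq¹⁻¹(α) ⊆ seq(α)` and `|seq(α)| = max |α| ℵ₀` give
`ℵ₀ · |seq¹⁻¹(α)| = max ℵ₀ |seq¹⁻¹(α)| = |seq(α)|`.
-/

open Cardinal

namespace List

variable {α β : Type*}

theorem eq_of_map_getRight?_eq_of_filterMap_getLeft?_eq {l l' : List (α ⊕ β)}
    (hr : l.map Sum.getRight? = l'.map Sum.getRight?)
    (hl : l.filterMap Sum.getLeft? = l'.filterMap Sum.getLeft?) : l = l' := by
  induction l generalizing l' with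
  | nil => cases l' <;> simp_all
  | cons a l ih =>
    cases l' with
    | nil => simp at hr
    | cons a' l' =>
      simp only [map_cons, cons.injEq] at hr
      rcases a with a | b <;> rcases a' with a' | b' <;>
        simp only [Sum.getRight?, Sum.getLeft?, filterMap_cons, reduceCtorEq, false_and,
          cons.injEq, Option.some.injEq] at hr hl
      · exact congrArg₂ _ (congrArg _ hl.1) (ih hr.2 hl.2)
      · exact congrArg₂ _ (congrArg _ hr.1) (ih hr.2 hl)

theorem Nodup.filterMap_getLeft? {l : List (α ⊕ β)} (hl : l.Nodup) :
    (l.filterMap Sum.getLeft?).Nodup :=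
  hl.filterMap fun _ _ _ h h' => by
    simp only [Option.mem_def, Sum.getLeft?_eq_some_iff] at h h'
    rw [h, h']

end List

def nodupSumEmbedding (α β : Type*) [Encodable β] :
    {l : List (α ⊕ β) // l.Nodup} ↪ ℕ × {l : List α // l.Nodup} where
  toFun l := (Encodable.encode (l.1.map Sum.getRight?), ⟨_, l.2.filterMap_getLeft?⟩)
  inj' l l' h := by
    simp only [Prod.mk.injEq, Subtype.mk.injEq] at h
    exact Subtype.ext <|
      List.eq_of_map_getRight?_eq_of_filterMap_getLeft?_eq (Encodable.encode_injective h.1) h.2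

theorem Cardinal.mk_nat_prod_nodup_eq_mk_list (α : Type*) [Nonempty α] :
    #(ℕ × {l : List α // l.Nodup}) = #(List α) := by
  have hN : #{l : List α // l.Nodup} ≠ 0 := mk_ne_zero_iff.2 ⟨⟨[], List.nodup_nil⟩⟩
  have hsingleton : #α ≤ #{l : List α // l.Nodup} :=
    mk_le_of_injective (f := fun a => ⟨[a], List.nodup_singleton a⟩) fun a b h => by simpa using h
  rw [mk_prod, mk_nat, lift_aleph0, lift_uzero, mul_eq_max_of_aleph0_le_left le_rfl hN,
    mk_list_eq_max_mk_aleph0]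
  refine le_antisymm (max_le (le_max_right _ _) ?_) ?_
  · exact (mk_subtype_le _).trans (mk_list_eq_max_mk_aleph0 α).le
  · exact max_le (hsingleton.trans (le_max_right _ _)) (le_max_left _ _)

/-- For every nonempty `x` there is an injection from the injective finite sequences over
`x ⊕ ω` into `ω × seq¹⁻¹(x)`, and consequently a bijection between `seq(x)` and
`ω × seq¹⁻¹(x)`. -/
theorem injective_seq_sum_inject {x : Type*} [Nonempty x] :
    (∃ f : {l : List (x ⊕ ℕ) // l.Nodup} → ℕ × {l : List x // l.Nodup},
        Function.Injective f) ∧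
    (∃ h : List x → ℕ × {l : List x // l.Nodup}, Function.Bijective h) := by
  obtain ⟨e⟩ := Cardinal.eq.1 (mk_nat_prod_nodup_eq_mk_list x)
  exact ⟨⟨_, (nodupSumEmbedding x ℕ).injective⟩, ⟨e.symm, e.symm.bijective⟩⟩
end

section
/- Let f be a permutation of a set x, and let y be the set of all non-trivial orbits of f (orbits of size at least 2). Then there is an injection from the power set of y into the set of all permutations of x, sending each set u of non-trivial orbits to the permutation agreeing with f on ⋃u and the identity elsewhere. Hence 2^|y| ≤ |S(x)|. -/
/-!
The orbits are the classes of `SameCycle f`, so the non-trivial ones are pairwise disjoint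
`f`-invariant sets, each containing a point moved by `f`. Restricting `f` to the union of a
subfamily `u` of them gives a permutation, and a moved point of an orbit `s` is still moved by
the restriction exactly when `s ∈ u`; so `u` can be read off from the restriction.
-/

open Function

namespace Equiv.Perm

variable {α : Type*}

theorem sameCycle_iff_exists_pow_eq_or {f : Perm α} {z v : α} :
    f.SameCycle z v ↔ ∃ n : ℕ, v = (f ^ n) z ∨ z = (f ^ n) v := by
  constructor
  · rintro ⟨k, rfl⟩
    obtain ⟨n, rfl | rfl⟩ := k.eq_nat_or_neg
    · exact ⟨n, Or.inl (by rw [zpow_natCast])⟩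
    · exact ⟨n, Or.inr (by simp [zpow_neg])⟩
  · rintro ⟨n, rfl | rfl⟩
    · exact SameCycle.rfl.pow_right
    · exact SameCycle.rfl.pow_left

open Classical in
noncomputable def restrictOn (f : Perm α) (S : Set α) (hS : ∀ z, f z ∈ S ↔ z ∈ S) : Perm α :=
  ofSubtype (f.subtypePerm hS)

theorem restrictOn_apply_of_mem {f : Perm α} {S : Set α} (hS : ∀ z, f z ∈ S ↔ z ∈ S) {z : α}
    (hz : z ∈ S) : f.restrictOn S hS z = f z := by
  classical
  rw [restrictOn, ofSubtype_apply_of_mem _ hz]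
  rfl

theorem restrictOn_apply_of_notMem {f : Perm α} {S : Set α} (hS : ∀ z, f z ∈ S ↔ z ∈ S) {z : α}
    (hz : z ∉ S) : f.restrictOn S hS z = z := by
  classical
  rw [restrictOn, ofSubtype_apply_of_not_mem _ hz]

section Family

variable {f : Perm α} {y : Set (Set α)}

theorem apply_mem_biUnion_iff (hinv : ∀ s ∈ y, ∀ z, f z ∈ s ↔ z ∈ s) (u : Set y) (z : α) :
    f z ∈ ⋃ s ∈ u, (s : Set α) ↔ z ∈ ⋃ s ∈ u, (s : Set α) := by
  simp only [Set.mem_iUnion₂]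
  exact exists₂_congr fun s _ => hinv s s.2 z

noncomputable def restrictFamily (hinv : ∀ s ∈ y, ∀ z, f z ∈ s ↔ z ∈ s) (u : Set y) : Perm α :=
  f.restrictOn (⋃ s ∈ u, (s : Set α)) (apply_mem_biUnion_iff hinv u)

theorem restrictFamily_apply_of_exists_mem (hinv : ∀ s ∈ y, ∀ z, f z ∈ s ↔ z ∈ s) {u : Set y}
    {z : α} (hz : ∃ s ∈ u, z ∈ (s : Set α)) : restrictFamily hinv u z = f z := by
  obtain ⟨s, hs, hzs⟩ := hz
  exact restrictOn_apply_of_mem _ (Set.mem_iUnion₂.2 ⟨s, hs, hzs⟩)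

theorem restrictFamily_apply_of_forall_notMem (hinv : ∀ s ∈ y, ∀ z, f z ∈ s ↔ z ∈ s)
    {u : Set y} {z : α} (hz : ∀ s ∈ u, z ∉ (s : Set α)) : restrictFamily hinv u z = z :=
  restrictOn_apply_of_notMem _ (by simpa using hz)

theorem mem_biUnion_iff_of_pairwiseDisjoint (hdisj : y.PairwiseDisjoint id) (u : Set y)
    {s : y} {w : α} (hw : w ∈ (s : Set α)) : w ∈ ⋃ t ∈ u, (t : Set α) ↔ s ∈ u := by
  simp only [Set.mem_iUnion₂]
  refine ⟨fun ⟨t, ht, hwt⟩ => ?_, fun hs => ⟨s, hs, hw⟩⟩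
  have hts : t = s := Subtype.ext <| hdisj.elim t.2 s.2 <| Set.not_disjoint_iff.2 ⟨w, hwt, hw⟩
  exact hts ▸ ht

theorem restrictFamily_apply_eq_iff (hinv : ∀ s ∈ y, ∀ z, f z ∈ s ↔ z ∈ s)
    (hdisj : y.PairwiseDisjoint id) (u : Set y) {s : y} {w : α} (hw : w ∈ (s : Set α))
    (hmoved : f w ≠ w) : restrictFamily hinv u w = f w ↔ s ∈ u := by
  have hmem := mem_biUnion_iff_of_pairwiseDisjoint hdisj u hw
  by_cases hs : s ∈ u
  · exact iff_of_true (restrictOn_apply_of_mem _ (hmem.2 hs)) hs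
  · refine iff_of_false ?_ hs
    rw [restrictFamily, restrictOn_apply_of_notMem _ (mt hmem.1 hs)]
    exact hmoved.symm

theorem restrictFamily_injective (hinv : ∀ s ∈ y, ∀ z, f z ∈ s ↔ z ∈ s)
    (hdisj : y.PairwiseDisjoint id) (hmoved : ∀ s ∈ y, ∃ w ∈ s, f w ≠ w) :
    Injective (restrictFamily hinv) := by
  intro u v huv
  ext s
  obtain ⟨w, hws, hw⟩ := hmoved s s.2
  rw [← restrictFamily_apply_eq_iff hinv hdisj u hws hw,
    ← restrictFamily_apply_eq_iff hinv hdisj v hws hw, huv]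

end Family

def nontrivialCycles (f : Perm α) : Set (Set α) :=
  {s | ∃ z, f z ≠ z ∧ s = {v | f.SameCycle z v}}

theorem apply_mem_iff_of_mem_nontrivialCycles {f : Perm α} {s : Set α}
    (hs : s ∈ f.nontrivialCycles) (z : α) : f z ∈ s ↔ z ∈ s := by
  obtain ⟨w, -, rfl⟩ := hs
  exact sameCycle_apply_right

theorem pairwiseDisjoint_nontrivialCycles (f : Perm α) :
    f.nontrivialCycles.PairwiseDisjoint id := by
  rintro _ ⟨a, -, rfl⟩ _ ⟨b, -, rfl⟩ hne
  refine Set.disjoint_left.2 fun w (ha : f.SameCycle a w) (hb : f.SameCycle b w) => hne ?_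
  ext v
  exact ⟨(hb.trans ha.symm).trans, (ha.trans hb.symm).trans⟩

theorem exists_apply_ne_of_mem_nontrivialCycles {f : Perm α} {s : Set α}
    (hs : s ∈ f.nontrivialCycles) : ∃ w ∈ s, f w ≠ w := by
  obtain ⟨w, hw, rfl⟩ := hs
  exact ⟨w, SameCycle.rfl, hw⟩

end Equiv.Perm

/-- Let `f` be a permutation of `x` and let `y` be the set of non-trivial orbits of `f`.
Then the power set of `y` injects into the permutations of `x`, by sending a set `u` of
non-trivial orbits to the permutation agreeing with `f` on `⋃ u` and identity elsewhere. -/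
theorem powerset_orbits_inject {x : Type*} (f : Equiv.Perm x) :
    ∀ (orb : x → Set x), (orb = fun z => {v | ∃ n : ℕ, v = (f ^ n) z ∨ z = (f ^ n) v}) →
    ∀ (y : Set (Set x)), (y = {s | ∃ z, f z ≠ z ∧ s = orb z}) →
    ∃ F : Set y → Equiv.Perm x, Function.Injective F ∧
      ∀ (u : Set y) (z : x),
        ((∃ s ∈ u, z ∈ (s : Set x)) → F u z = f z) ∧
        ((∀ s ∈ u, z ∉ (s : Set x)) → F u z = z) := by
  intro orb horb y hy
  have horb : orb = fun z => {v | f.SameCycle z v} := by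
    subst horb
    ext z v
    exact Equiv.Perm.sameCycle_iff_exists_pow_eq_or.symm
  subst horb
  change y = f.nontrivialCycles at hy
  subst hy
  have hinv := fun s (hs : s ∈ f.nontrivialCycles) =>
    Equiv.Perm.apply_mem_iff_of_mem_nontrivialCycles hs
  exact ⟨Equiv.Perm.restrictFamily hinv,
    Equiv.Perm.restrictFamily_injective hinv f.pairwiseDisjoint_nontrivialCycles
      fun _ => Equiv.Perm.exists_apply_ne_of_mem_nontrivialCycles,
    fun u z => ⟨Equiv.Perm.restrictFamily_apply_of_exists_mem hinv,
      Equiv.Perm.restrictFamily_apply_of_forall_notMem hinv⟩⟩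
end

section
/- For every set x with a distinguished element z, there is a finite-to-one map from the set of injective finite sequences over x into the set of finitary permutations of x, and an injection from the injective finite sequences over x into ω × S_fin(x). Concretely, map t to the cycle (t(0); …; t(n−1)) if z ∈ ran(t), and to the cycle (t(0); …; t(n−1); z) otherwise. -/
/-!
`List.insert z l` prepends `z` when it is missing, so `(l.insert z).formPerm` is the cycle
`(t₀; …; tₙ₋₁; z)` up to rotation. Every entry of `l` is moved by this cycle or equals `z`, so a
fiber consists of injective lists with entries in the finite set `{v | p v ≠ v} ∪ {z}`. A cycle
through `z` determines its list once the position of `z` is known, and `l` is recovered from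
`l.insert z` once we know whether `z ∈ l`: the natural number encodes that bit and that position.
-/

open Equiv

namespace List

variable {α : Type*}

theorem finite_setOf_nodup_forall_mem {s : Set α} (hs : s.Finite) :
    {l : List α | l.Nodup ∧ ∀ a ∈ l, a ∈ s}.Finite := by
  classical
  have := hs.to_subtype
  refine ((finite_length_le s hs.toFinset.card).image (map (↑))).subset ?_
  rintro l ⟨hnd, hl⟩
  refine ⟨l.pmap Subtype.mk hl, ?_, by simp [map_pmap]⟩
  calc (l.pmap Subtype.mk hl).length = l.toFinset.card := by simp [toFinset_card_of_nodup hnd]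
    _ ≤ _ := Finset.card_le_card fun a ha => by simpa using hl a (mem_toFinset.1 ha)

theorem insert_inj_of_mem_iff [DecidableEq α] {a : α} {l l' : List α} (ha : a ∈ l ↔ a ∈ l')
    (h : l.insert a = l'.insert a) : l = l' := by
  by_cases hl : a ∈ l
  · rwa [insert_of_mem hl, insert_of_mem (ha.1 hl)] at h
  · rw [insert_of_not_mem hl, insert_of_not_mem (ha.not.1 hl)] at h
    exact cons_injective h

variable [DecidableEq α]

theorem finite_setOf_formPerm_apply_ne (l : List α) : {v | l.formPerm v ≠ v}.Finite :=
  l.toFinset.finite_toSet.subset (support_formPerm_le' l)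

theorem formPerm_apply_ne_self_or_eq {l : List α} (hl : l.Nodup) {a z : α} (ha : a ∈ l)
    (hz : z ∈ l) : l.formPerm a ≠ a ∨ a = z := by
  by_cases hlen : 2 ≤ l.length
  · exact Or.inl ((formPerm_apply_mem_ne_self_iff l hl a ha).2 hlen)
  · obtain ⟨i, hi, rfl⟩ := getElem_of_mem ha
    obtain ⟨j, hj, rfl⟩ := getElem_of_mem hz
    exact Or.inr (by congr; omega)

theorem formPerm_append_comm {l l' : List α} (h : (l ++ l').Nodup) :
    (l ++ l').formPerm = (l' ++ l).formPerm := by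
  rw [← rotate_append_length_eq l l', formPerm_rotate _ h]

theorem IsRotated.eq_of_cons {z : α} {t t' : List α} (hn : (z :: t).Nodup)
    (h : z :: t ~r z :: t') : t = t' := by
  obtain ⟨n, hle, hrot⟩ := isRotated_iff_mod.1 h
  rcases hle.lt_or_eq with hlt | rfl
  · have hz : (z :: t)[n] = z :=
      (getElem?_eq_some_iff.1 (by rw [← head?_rotate hlt, hrot]; rfl)).2
    obtain rfl : n = 0 := by rw [← hn.idxOf_getElem n hlt, hz, idxOf_cons_self]
    simpa using hrot
  · simpa [rotate_length] using hrot

theorem eq_of_formPerm_cons_eq {z : α} {t t' : List α} (hn : (z :: t).Nodup)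
    (hn' : (z :: t').Nodup) (hp : (z :: t).formPerm = (z :: t').formPerm) : t = t' := by
  rcases (formPerm_eq_formPerm_iff hn hn').1 hp with hr | ⟨hl, hl'⟩
  · exact hr.eq_of_cons hn
  · simp_all

theorem eq_of_formPerm_eq_of_idxOf_eq {z : α} {l l' : List α} (hl : l.Nodup) (hl' : l'.Nodup)
    (hz : z ∈ l) (hz' : z ∈ l') (hp : l.formPerm = l'.formPerm) (hi : l.idxOf z = l'.idxOf z) :
    l = l' := by
  obtain ⟨u, v, rfl⟩ := append_of_mem hz
  obtain ⟨u', v', rfl⟩ := append_of_mem hz'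
  have idxOf_eq : ∀ u v : List α, (u ++ z :: v).Nodup → (u ++ z :: v).idxOf z = u.length :=
    fun u v h => by
      rw [idxOf_append_of_notMem fun hu => disjoint_of_nodup_append h hu mem_cons_self,
        idxOf_cons_self, Nat.add_zero]
  have hn : (z :: (v ++ u)).Nodup := perm_append_comm.nodup_iff.1 hl
  have hn' : (z :: (v' ++ u')).Nodup := perm_append_comm.nodup_iff.1 hl'
  have hvu : v ++ u = v' ++ u' := eq_of_formPerm_cons_eq hn hn' <| by
    rw [← cons_append, ← cons_append, ← formPerm_append_comm hl, ← formPerm_append_comm hl', hp]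
  obtain ⟨rfl, rfl⟩ := append_inj' hvu (by rw [← idxOf_eq u v hl, hi, idxOf_eq u' v' hl'])
  rfl

end List

/-- For every set `x` with a distinguished element `z`, there is a finite-to-one map from
the injective finite sequences over `x` into the finitary permutations of `x`, and an
injection from the injective finite sequences over `x` into `ω × S_fin(x)`. -/
theorem injective_seq_into_finitary_perms {x : Type*} (z : x) :
    (∃ F : {l : List x // l.Nodup} → {p : Equiv.Perm x // {v | p v ≠ v}.Finite},
        ∀ p, (F ⁻¹' {p}).Finite) ∧
    (∃ G : {l : List x // l.Nodup} → ℕ × {p : Equiv.Perm x // {v | p v ≠ v}.Finite},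
        Function.Injective G) := by
  classical
  let cycle : {l : List x // l.Nodup} → {p : Perm x // {v | p v ≠ v}.Finite} :=
    fun l => ⟨(l.1.insert z).formPerm, List.finite_setOf_formPerm_apply_ne _⟩
  refine ⟨⟨cycle, fun p => ?_⟩,
    ⟨fun l => (boolProdNatEquivNat (decide (z ∈ l.1), (l.1.insert z).idxOf z), cycle l), ?_⟩⟩
  · refine ((List.finite_setOf_nodup_forall_mem (p.2.union (Set.finite_singleton z))).preimage
      Subtype.val_injective.injOn).subset ?_
    rintro ⟨l, hl⟩ rfl
    exact ⟨hl, fun a ha => List.formPerm_apply_ne_self_or_eq hl.insert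
      (List.mem_insert_of_mem ha) List.mem_insert_self⟩
  · rintro ⟨l, hl⟩ ⟨l', hl'⟩ h
    simp only [Prod.mk.injEq, boolProdNatEquivNat.injective.eq_iff, decide_eq_decide] at h
    obtain ⟨⟨hmem, hidx⟩, hperm⟩ := h
    exact Subtype.ext <| List.insert_inj_of_mem_iff hmem <|
      List.eq_of_formPerm_eq_of_idxOf_eq hl.insert hl'.insert List.mem_insert_self
        List.mem_insert_self (congrArg Subtype.val hperm) hidx
end

section
/- For every set x with at least 8 distinguished elements (i.e., given an injection from an 8-element set into x), there is an injection from [[x]²]² ∪ {∅} into S₅(x), the set of permutations of x moving at most 5 elements. In particular, |[[x]²]²| + 1 ≤ |S₅(x)| for all x with |x| ≥ 8 (and directly for |x| < 8 by computation). -/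
open Equiv Set

open scoped Classical in
/-- Canonical decoding of a permutation back to a set of 2-element sets. -/
noncomputable def pdecode {x : Type*} (f : Fin 8 → x) (σ : Equiv.Perm x) : Set (Set x) :=
  if σ * σ = 1 then {S | ∃ w, σ w ≠ w ∧ S = {w, σ w}}
  else {S | ∃ t p, σ t ≠ t ∧ σ (σ t) ≠ t ∧ (∃ k : Fin 8, k.val ≤ 3 ∧ σ t = f k) ∧
        (∃ m : Fin 8, 4 ≤ m.val ∧ σ (σ t) = f m) ∧ σ p ≠ p ∧ σ (σ p) = p ∧ S = {t, p}}

lemma pdecode_one {x : Type*} (f : Fin 8 → x) : pdecode f (1 : Equiv.Perm x) = ∅ := by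
  unfold pdecode
  simp

lemma pdecode_disjoint {x : Type*} [DecidableEq x] (f : Fin 8 → x) {a b c d : x}
    (hab : a ≠ b) (hcd : c ≠ d) (hac : a ≠ c) (had : a ≠ d) (hbc : b ≠ c) (hbd : b ≠ d) :
    pdecode f (Equiv.swap a b * Equiv.swap c d) = {({a, b} : Set x), {c, d}} := by
  set σ := Equiv.swap a b * Equiv.swap c d with hσ
  have ha : σ a = b := by
    rw [hσ, Equiv.Perm.mul_apply, Equiv.swap_apply_of_ne_of_ne hac had, Equiv.swap_apply_left]
  have hb : σ b = a := by
    rw [hσ, Equiv.Perm.mul_apply, Equiv.swap_apply_of_ne_of_ne hbc hbd, Equiv.swap_apply_right]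
  have hc : σ c = d := by
    rw [hσ, Equiv.Perm.mul_apply, Equiv.swap_apply_left,
      Equiv.swap_apply_of_ne_of_ne (Ne.symm had) (Ne.symm hbd)]
  have hd : σ d = c := by
    rw [hσ, Equiv.Perm.mul_apply, Equiv.swap_apply_right,
      Equiv.swap_apply_of_ne_of_ne (Ne.symm hac) (Ne.symm hbc)]
  have hfix : ∀ p, p ≠ a → p ≠ b → p ≠ c → p ≠ d → σ p = p := by
    intro p h1 h2 h3 h4
    rw [hσ, Equiv.Perm.mul_apply, Equiv.swap_apply_of_ne_of_ne h3 h4,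
      Equiv.swap_apply_of_ne_of_ne h1 h2]
  have hmoved : ∀ p, σ p ≠ p → p = a ∨ p = b ∨ p = c ∨ p = d := by
    intro p hp
    by_contra hcon
    push_neg at hcon
    exact hp (hfix p hcon.1 hcon.2.1 hcon.2.2.1 hcon.2.2.2)
  have hσσ : σ * σ = 1 := by
    apply Equiv.ext
    intro p
    simp only [Equiv.Perm.mul_apply, Equiv.Perm.one_apply]
    by_cases h1 : p = a
    · subst h1; rw [ha, hb]
    by_cases h2 : p = b
    · subst h2; rw [hb, ha]
    by_cases h3 : p = c
    · subst h3; rw [hc, hd]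
    by_cases h4 : p = d
    · subst h4; rw [hd, hc]
    rw [hfix p h1 h2 h3 h4, hfix p h1 h2 h3 h4]
  unfold pdecode
  rw [if_pos hσσ]
  ext S
  simp only [Set.mem_setOf_eq, Set.mem_insert_iff, Set.mem_singleton_iff]
  constructor
  · rintro ⟨w, hw, rfl⟩
    rcases hmoved w hw with rfl | rfl | rfl | rfl
    · left; rw [ha]
    · left; rw [hb, Set.pair_comm]
    · right; rw [hc]
    · right; rw [hd, Set.pair_comm]
  · rintro (rfl | rfl)
    · exact ⟨a, by rw [ha]; exact Ne.symm hab, by rw [ha]⟩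
    · exact ⟨c, by rw [hc]; exact Ne.symm hcd, by rw [hc]⟩

lemma pdecode_shared {x : Type*} [DecidableEq x] {f : Fin 8 → x} (hf : Function.Injective f)
    {e u v : x} {k m : Fin 8} (hk : k.val ≤ 3) (hm : 4 ≤ m.val)
    (hue : u ≠ e) (hve : v ≠ e) (huv : u ≠ v)
    (hke : f k ≠ e) (hku : f k ≠ u) (hkv : f k ≠ v)
    (hme : f m ≠ e) (hmu : f m ≠ u) (hmv : f m ≠ v) :
    pdecode f (Equiv.swap e (f k) * Equiv.swap (f k) (f m) * Equiv.swap u v)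
      = {({e, u} : Set x), {e, v}} := by
  have hkm : f k ≠ f m := by
    intro h
    have := congrArg Fin.val (hf h)
    omega
  set σ := Equiv.swap e (f k) * Equiv.swap (f k) (f m) * Equiv.swap u v with hσ
  have happ : ∀ p, σ p = Equiv.swap e (f k) (Equiv.swap (f k) (f m) (Equiv.swap u v p)) := by
    intro p; rw [hσ]; rfl
  have he : σ e = f k := by
    rw [happ, Equiv.swap_apply_of_ne_of_ne (Ne.symm hue) (Ne.symm hve),
      Equiv.swap_apply_of_ne_of_ne (Ne.symm hke) (Ne.symm hme), Equiv.swap_apply_left]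
  have hz : σ (f k) = f m := by
    rw [happ, Equiv.swap_apply_of_ne_of_ne hku hkv, Equiv.swap_apply_left,
      Equiv.swap_apply_of_ne_of_ne hme (Ne.symm hkm)]
  have hw : σ (f m) = e := by
    rw [happ, Equiv.swap_apply_of_ne_of_ne hmu hmv, Equiv.swap_apply_right,
      Equiv.swap_apply_right]
  have hu : σ u = v := by
    rw [happ, Equiv.swap_apply_left, Equiv.swap_apply_of_ne_of_ne (Ne.symm hkv) (Ne.symm hmv),
      Equiv.swap_apply_of_ne_of_ne hve (Ne.symm hkv)]
  have hv : σ v = u := by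
    rw [happ, Equiv.swap_apply_right, Equiv.swap_apply_of_ne_of_ne (Ne.symm hku) (Ne.symm hmu),
      Equiv.swap_apply_of_ne_of_ne hue (Ne.symm hku)]
  have hfix : ∀ p, p ≠ e → p ≠ f k → p ≠ f m → p ≠ u → p ≠ v → σ p = p := by
    intro p h1 h2 h3 h4 h5
    rw [happ, Equiv.swap_apply_of_ne_of_ne h4 h5, Equiv.swap_apply_of_ne_of_ne h2 h3,
      Equiv.swap_apply_of_ne_of_ne h1 h2]
  have hmoved : ∀ p, σ p ≠ p → p = e ∨ p = f k ∨ p = f m ∨ p = u ∨ p = v := by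
    intro p hp
    by_contra hcon
    push_neg at hcon
    exact hp (hfix p hcon.1 hcon.2.1 hcon.2.2.1 hcon.2.2.2.1 hcon.2.2.2.2)
  have hσσ : ¬ (σ * σ = 1) := by
    intro h
    have h1 : (σ * σ) e = e := by rw [h]; rfl
    rw [Equiv.Perm.mul_apply, he, hz] at h1
    exact hme h1
  unfold pdecode
  rw [if_neg hσσ]
  ext S
  simp only [Set.mem_setOf_eq, Set.mem_insert_iff, Set.mem_singleton_iff]
  constructor
  · rintro ⟨t, p, ht1, ht2, ⟨k', hk', hfk'⟩, ⟨m', hm', hfm'⟩, hp1, hp2, rfl⟩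
    have hte : t = e := by
      rcases hmoved t ht1 with rfl | rfl | rfl | rfl | rfl
      · rfl
      · rw [hz] at hfk'
        have := congrArg Fin.val (hf hfk')
        omega
      · rw [hw, he] at hfm'
        have := congrArg Fin.val (hf hfm')
        omega
      · rw [hu, hv] at ht2; exact absurd rfl ht2
      · rw [hv, hu] at ht2; exact absurd rfl ht2
    subst hte
    have hpuv : p = u ∨ p = v := by
      rcases hmoved p hp1 with rfl | rfl | rfl | rfl | rfl
      · rw [he, hz] at hp2; exact absurd hp2 hme
      · rw [hz, hw] at hp2; exact absurd hp2 (Ne.symm hke)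
      · rw [hw, he] at hp2; exact absurd hp2 hkm
      · left; rfl
      · right; rfl
    rcases hpuv with rfl | rfl
    · left; rfl
    · right; rfl
  · rintro (rfl | rfl)
    · refine ⟨e, u, ?_, ?_, ⟨k, hk, he.symm ▸ rfl⟩, ⟨m, hm, ?_⟩, ?_, ?_, rfl⟩
      · rw [he]; exact hke
      · rw [he, hz]; exact hme
      · rw [he, hz]
      · rw [hu]; exact Ne.symm huv
      · rw [hu, hv]
    · refine ⟨e, v, ?_, ?_, ⟨k, hk, he.symm ▸ rfl⟩, ⟨m, hm, ?_⟩, ?_, ?_, rfl⟩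
      · rw [he]; exact hke
      · rw [he, hz]; exact hme
      · rw [he, hz]
      · rw [hv]; exact huv
      · rw [hv, hu]

lemma exists_good_index {x : Type*} {f : Fin 8 → x} (hf : Function.Injective f)
    (e u v : x) (s : Finset (Fin 8)) (hs : 4 ≤ s.card) :
    ∃ k ∈ s, f k ≠ e ∧ f k ≠ u ∧ f k ≠ v := by
  classical
  by_contra h
  push_neg at h
  have hsub : s.image f ⊆ {e, u, v} := by
    intro y hy
    simp only [Finset.mem_image] at hy
    obtain ⟨j, hj, rfl⟩ := hy
    have := h j hj
    simp only [Finset.mem_insert, Finset.mem_singleton]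
    by_cases h1 : f j = e
    · exact Or.inl h1
    by_cases h2 : f j = u
    · exact Or.inr (Or.inl h2)
    exact Or.inr (Or.inr (this h1 h2))
  have h1 : s.card ≤ ({e, u, v} : Finset x).card := by
    rw [← Finset.card_image_of_injective s hf]
    exact Finset.card_le_card hsub
  have h2 : ({e, u, v} : Finset x).card ≤ 3 := by
    have ha := Finset.card_insert_le e ({u, v} : Finset x)
    have hb := Finset.card_insert_le u ({v} : Finset x)
    simp only [Finset.card_singleton] at hb
    omega
  omega

lemma eq_pair_of_mem {x : Type*} {S : Set x} (hS : S.ncard = 2) {e : x} (he : e ∈ S) :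
    ∃ u, u ≠ e ∧ S = {e, u} := by
  obtain ⟨a, b, hab, rfl⟩ := Set.ncard_eq_two.mp hS
  simp only [Set.mem_insert_iff, Set.mem_singleton_iff] at he
  rcases he with rfl | rfl
  · exact ⟨b, Ne.symm hab, rfl⟩
  · exact ⟨a, hab, Set.pair_comm a e⟩

/-- If `x` has at least 8 distinguished elements, then `[[x]²]² ∪ {∅}` injects into
`S₅(x)`, the set of permutations of `x` moving at most 5 elements. -/
theorem pairs_of_pairs_inject {x : Type*} (f : Fin 8 → x) (hf : Function.Injective f) :
    ∃ F : {P : Set {s : Set x // s.ncard = 2} // P = ∅ ∨ P.ncard = 2} →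
          {p : Equiv.Perm x // ∃ s : Finset x, s.card ≤ 5 ∧ ∀ z, p z ≠ z → z ∈ s},
      Function.Injective F := by
  classical
  have key : ∀ P : {P : Set {s : Set x // s.ncard = 2} // P = ∅ ∨ P.ncard = 2},
      ∃ σ : Equiv.Perm x, (∃ s : Finset x, s.card ≤ 5 ∧ ∀ z, σ z ≠ z → z ∈ s) ∧
        pdecode f σ = Subtype.val '' (P : Set {s : Set x // s.ncard = 2}) := by
    rintro ⟨P, hP | hP⟩
    · refine ⟨1, ⟨∅, by simp, fun z hz => absurd rfl hz⟩, ?_⟩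
      simp only [hP]
      rw [pdecode_one, Set.image_empty]
    · obtain ⟨s, t, hst, rfl⟩ := Set.ncard_eq_two.mp hP
      by_cases hcom : ∃ e, e ∈ (s : Set x) ∧ e ∈ (t : Set x)
      · -- shared element case
        obtain ⟨e, hes, het⟩ := hcom
        obtain ⟨u, hue, hsu⟩ := eq_pair_of_mem s.2 hes
        obtain ⟨v, hve, htv⟩ := eq_pair_of_mem t.2 het
        have huv : u ≠ v := by
          intro h
          apply hst
          apply Subtype.ext
          rw [hsu, htv, h]
        obtain ⟨k, hkmem, hke, hku, hkv⟩ :=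
          exists_good_index hf e u v ({0, 1, 2, 3} : Finset (Fin 8)) (by decide)
        obtain ⟨m, hmmem, hme, hmu, hmv⟩ :=
          exists_good_index hf e u v ({4, 5, 6, 7} : Finset (Fin 8)) (by decide)
        have hk : k.val ≤ 3 := by
          simp only [Finset.mem_insert, Finset.mem_singleton] at hkmem
          rcases hkmem with rfl | rfl | rfl | rfl <;> decide
        have hm : 4 ≤ m.val := by
          simp only [Finset.mem_insert, Finset.mem_singleton] at hmmem
          rcases hmmem with rfl | rfl | rfl | rfl <;> decide
        refine ⟨Equiv.swap e (f k) * Equiv.swap (f k) (f m) * Equiv.swap u v, ?_, ?_⟩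
        · refine ⟨{e, f k, f m, u, v}, ?_, ?_⟩
          · have h1 := Finset.card_insert_le e ({f k, f m, u, v} : Finset x)
            have h2 := Finset.card_insert_le (f k) ({f m, u, v} : Finset x)
            have h3 := Finset.card_insert_le (f m) ({u, v} : Finset x)
            have h4 := Finset.card_insert_le u ({v} : Finset x)
            simp only [Finset.card_singleton] at h4
            omega
          · intro p hp
            simp only [Finset.mem_insert, Finset.mem_singleton]
            by_contra hcon
            push_neg at hcon
            apply hp
            simp only [Equiv.Perm.mul_apply]
            rw [Equiv.swap_apply_of_ne_of_ne hcon.2.2.2.1 hcon.2.2.2.2,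
              Equiv.swap_apply_of_ne_of_ne hcon.2.1 hcon.2.2.1,
              Equiv.swap_apply_of_ne_of_ne hcon.1 hcon.2.1]
        · rw [pdecode_shared hf hk hm hue hve huv hke hku hkv hme hmu hmv]
          rw [Set.image_pair, hsu, htv]
      · -- disjoint case
        push_neg at hcom
        obtain ⟨a, b, hab, hsab⟩ := Set.ncard_eq_two.mp s.2
        obtain ⟨c, d, hcd, htcd⟩ := Set.ncard_eq_two.mp t.2
        have hadist : ∀ p, p ∈ (s : Set x) → p ∉ (t : Set x) := hcom
        have has : a ∈ (s : Set x) := by rw [hsab]; exact Set.mem_insert a {b}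
        have hbs : b ∈ (s : Set x) := by rw [hsab]; exact Set.mem_insert_of_mem a rfl
        have hct : c ∈ (t : Set x) := by rw [htcd]; exact Set.mem_insert c {d}
        have hdt : d ∈ (t : Set x) := by rw [htcd]; exact Set.mem_insert_of_mem c rfl
        have hac : a ≠ c := fun h => hadist a has (h ▸ hct)
        have had : a ≠ d := fun h => hadist a has (h ▸ hdt)
        have hbc : b ≠ c := fun h => hadist b hbs (h ▸ hct)
        have hbd : b ≠ d := fun h => hadist b hbs (h ▸ hdt)
        refine ⟨Equiv.swap a b * Equiv.swap c d, ?_, ?_⟩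
        · refine ⟨{a, b, c, d}, ?_, ?_⟩
          · have h1 := Finset.card_insert_le a ({b, c, d} : Finset x)
            have h2 := Finset.card_insert_le b ({c, d} : Finset x)
            have h3 := Finset.card_insert_le c ({d} : Finset x)
            simp only [Finset.card_singleton] at h3
            omega
          · intro p hp
            simp only [Finset.mem_insert, Finset.mem_singleton]
            by_contra hcon
            push_neg at hcon
            apply hp
            simp only [Equiv.Perm.mul_apply]
            rw [Equiv.swap_apply_of_ne_of_ne hcon.2.2.1 hcon.2.2.2,
              Equiv.swap_apply_of_ne_of_ne hcon.1 hcon.2.1]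
        · rw [pdecode_disjoint f hab hcd hac had hbc hbd]
          rw [Set.image_pair, hsab, htcd]
  choose g hg1 hg2 using key
  refine ⟨fun P => ⟨g P, hg1 P⟩, ?_⟩
  intro P Q h
  have hgPQ : g P = g Q := congrArg Subtype.val h
  have himg : Subtype.val '' (P : Set {s : Set x // s.ncard = 2})
      = Subtype.val '' (Q : Set {s : Set x // s.ncard = 2}) := by
    rw [← hg2 P, ← hg2 Q, hgPQ]
  exact Subtype.ext (Set.image_injective.mpr Subtype.val_injective himg)
end

section
/- For every n ∈ ω with n ≥ 1, every set x, and every injection f : 2n(n+1) → x, one can construct an injection g from xⁿ (functions from n into x) into S_{2n+1}(x) \ S_{2n}(x), the set of permutations of x moving exactly 2n+1 elements. Consequently, for all cardinals 𝔞 ≥ 2n(n+1), 𝔞ⁿ ≤ |S_{2n+1}(x)|. -/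
/-!
Cut the reserved indices `[0, 2n(n+1))` into `n + 1` blocks of `2n` and use `a = f 0` as an
anchor. A tuple `t` is sent to the cycle `(a, w₀, …, wₙ₋₁, z₀, …, zₙ₋₁)`, where `wᵢ = tᵢ` if `tᵢ ≠ a`
is the first occurrence of its value and a filler otherwise, and `zᵢ` is a filler taken from
block `0` if `tᵢ = a`, from block `1` if `tᵢ ≠ a` is a first occurrence, and from block `q + 2`
if `tᵢ` repeats the first occurrence `t_q`. Fillers are reserved elements different from `a` and
from every entry of `t`; since `t` has at most `n` values, each block still holds `n` of them, so
all `2n + 1` entries of the cycle are distinct. Reading the cycle off from `a` recovers every `wᵢ`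
and `zᵢ`; the block of `zᵢ` tells which case `tᵢ` is in, and then `tᵢ` is `a`, `wᵢ` or `w_q`.
-/

open Finset

theorem List.ncard_setOf_formPerm_apply_ne {α : Type*} [DecidableEq α] {l : List α}
    (hl : l.Nodup) (h2 : 2 ≤ l.length) : {z | l.formPerm z ≠ z}.ncard = l.length := by
  rw [l.support_formPerm_of_nodup' hl (by rintro z rfl; simp at h2), Set.ncard_coe_finset,
    List.toFinset_card_of_nodup hl]

theorem List.eq_of_formPerm_cons_eq_s12 {α : Type*} [DecidableEq α] {a : α} {l l' : List α}
    (hl : (a :: l).Nodup) (hl' : (a :: l').Nodup) (hlen : l.length = l'.length)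
    (h : (a :: l).formPerm = (a :: l').formPerm) : l = l' := by
  refine List.ext_getElem hlen fun k hk hk' => ?_
  have e := List.formPerm_pow_apply_head a l hl (k + 1)
  rw [h, List.formPerm_pow_apply_head a l' hl'] at e
  simp only [List.length_cons, Nat.mod_eq_of_lt (Nat.succ_lt_succ hk),
    Nat.mod_eq_of_lt (Nat.succ_lt_succ hk'), List.getElem_cons_succ] at e
  exact e.symm

theorem Finset.card_le_card_filter_notMem_add {ι β : Type*} [DecidableEq β] {s : Finset ι}
    {f : ι → β} (u : Finset β) (hf : Set.InjOn f s) : #s ≤ #{a ∈ s | f a ∉ u} + #u := by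
  rw [← card_filter_add_card_filter_not (s := s) (fun a => f a ∉ u)]
  gcongr
  refine card_le_card_of_injOn f (fun a ha => ?_) (hf.mono (filter_subset _ s))
  simpa using (mem_filter.1 ha).2

namespace CycleEncoding

def block (n b : ℕ) : Finset ℕ := Ico (b * (2 * n)) ((b + 1) * (2 * n))

lemma card_block (n b : ℕ) : #(block n b) = 2 * n := by
  rw [block, Nat.card_Ico, add_one_mul, Nat.add_sub_cancel_left]

lemma eq_of_mem_block {n b b' k : ℕ} (h : k ∈ block n b) (h' : k ∈ block n b') : b = b' := by
  rw [block, mem_Ico] at h h'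
  rw [← Nat.div_eq_of_lt_le h.1 h.2, ← Nat.div_eq_of_lt_le h'.1 h'.2]

lemma lt_of_mem_block {n b k : ℕ} (hb : b ≤ n) (h : k ∈ block n b) : k < 2 * n * (n + 1) := by
  rw [block, mem_Ico] at h
  calc k < (b + 1) * (2 * n) := h.2
    _ ≤ (n + 1) * (2 * n) := by gcongr
    _ = 2 * n * (n + 1) := mul_comm _ _

lemma eq_of_apply_eq_of_mem_block {x : Type*} {F : ℕ → x} {n b b' k k' : ℕ}
    (hF : Set.InjOn F (Set.Iio (2 * n * (n + 1)))) (hb : b ≤ n) (hb' : b' ≤ n)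
    (hk : k ∈ block n b) (hk' : k' ∈ block n b') (h : F k = F k') : b = b' ∧ k = k' := by
  have e : k = k' := hF (lt_of_mem_block hb hk) (lt_of_mem_block hb' hk') h
  exact ⟨eq_of_mem_block hk (e ▸ hk'), e⟩

noncomputable section

variable {x : Type*} [DecidableEq x] {n : ℕ} (F : ℕ → x) (t : Fin n → x)

def freeIndices (b : ℕ) : Finset ℕ := {k ∈ block n b | F k ∉ insert (F 0) (univ.image t)}

def UsableBlock (b : ℕ) : Prop := b ≤ n ∧ (b = 0 → F 0 ∈ univ.image t)

def filler (b i : ℕ) : ℕ := Nat.nth (· ∈ freeIndices F t b) i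

def firstIndex (i : Fin n) : Fin n := ({j | t j = t i} : Finset (Fin n)).min' ⟨i, by simp⟩

/-- `0`: the entry is the anchor `F 0`; `1`: the first occurrence of any other value;
`q + 2`: a repetition of the entry at its first occurrence `q`. -/
def tag (i : Fin n) : ℕ :=
  if t i = F 0 then 0 else if firstIndex t i = i then 1 else firstIndex t i + 2

def valueSlot (i : Fin n) : x := if tag F t i = 1 then t i else F (filler F t 1 i)

def tagSlot (i : Fin n) : x := F (filler F t (tag F t i) i)

def cycleList : List x := F 0 :: (List.ofFn (valueSlot F t) ++ List.ofFn (tagSlot F t))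

variable {F t}

lemma apply_firstIndex (i : Fin n) : t (firstIndex t i) = t i := by
  unfold firstIndex
  simpa using min'_mem ({j | t j = t i} : Finset (Fin n)) ⟨i, by simp⟩

lemma firstIndex_le (i : Fin n) : firstIndex t i ≤ i := min'_le _ _ (by simp)

lemma firstIndex_congr {i j : Fin n} (h : t i = t j) : firstIndex t i = firstIndex t j := by
  simp only [firstIndex, h]

lemma firstIndex_firstIndex (i : Fin n) : firstIndex t (firstIndex t i) = firstIndex t i :=
  firstIndex_congr (apply_firstIndex i)

lemma tag_eq_zero_iff {i : Fin n} : tag F t i = 0 ↔ t i = F 0 := by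
  unfold tag; split_ifs <;> simp_all

lemma tag_eq_one_iff {i : Fin n} : tag F t i = 1 ↔ t i ≠ F 0 ∧ firstIndex t i = i := by
  unfold tag; split_ifs <;> simp_all

lemma tag_le (i : Fin n) : tag F t i ≤ n := by
  unfold tag
  split_ifs with h0 h1
  · omega
  · omega
  · have := Fin.lt_def.1 (lt_of_le_of_ne (firstIndex_le i) h1)
    omega

lemma firstIndex_val_eq {i : Fin n} (h : t i ≠ F 0) :
    (firstIndex t i : ℕ) = if tag F t i = 1 then (i : ℕ) else tag F t i - 2 := by
  unfold tag
  split_ifs <;> simp_all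

lemma valueSlot_firstIndex {i : Fin n} (h : t i ≠ F 0) :
    valueSlot F t (firstIndex t i) = t i := by
  have htag : tag F t (firstIndex t i) = 1 :=
    tag_eq_one_iff.2 ⟨by rwa [apply_firstIndex (t := t)], firstIndex_firstIndex i⟩
  rw [valueSlot, if_pos htag, apply_firstIndex (t := t)]

lemma usableBlock_tag (i : Fin n) : UsableBlock F t (tag F t i) :=
  ⟨tag_le i, fun h => mem_image.2 ⟨i, mem_univ i, tag_eq_zero_iff.1 h⟩⟩

lemma usableBlock_one (hn : 0 < n) : UsableBlock F t 1 := ⟨hn, by omega⟩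

lemma mem_freeIndices {b k : ℕ} :
    k ∈ freeIndices F t b ↔ k ∈ block n b ∧ F k ≠ F 0 ∧ ∀ j, t j ≠ F k := by
  simp only [freeIndices, mem_filter, mem_insert, mem_image, mem_univ, true_and, not_or,
    not_exists]

lemma length_cycleList : (cycleList F t).length = 2 * n + 1 := by
  simp [cycleList]; ring

variable (hF : Set.InjOn F (Set.Iio (2 * n * (n + 1))))
include hF

lemma le_card_freeIndices {b : ℕ} (hb : UsableBlock F t b) : n ≤ #(freeIndices F t b) := by
  -- The anchor's index `0` lies only in block `0`, where the anchor is already a value of `t`.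
  have hfree : freeIndices F t b = {k ∈ block n b | F k ∉ univ.image t} := by
    refine filter_congr fun k hk => ?_
    rw [mem_insert, not_or, and_iff_right_iff_imp]
    rintro hkt hk0
    have hN := lt_of_mem_block hb.1 hk
    obtain rfl : k = 0 := hF hN ((Nat.zero_le k).trans_lt hN) hk0
    have hb0 : b = 0 := by
      rw [block, mem_Ico, Nat.le_zero, mul_eq_zero] at hk
      rcases hk with ⟨hb0 | hn0, hpos⟩
      · exact hb0
      · simp [hn0] at hpos
    exact hkt (hb.2 hb0)
  have hcard := card_le_card_filter_notMem_add (univ.image t)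
    (hF.mono fun k hk => lt_of_mem_block hb.1 hk)
  rw [card_block, ← hfree] at hcard
  have := (card_image_le (s := univ) (f := t)).trans_eq (card_fin n)
  omega

lemma filler_mem_freeIndices {b i : ℕ} (hb : UsableBlock F t b) (hi : i < n) :
    filler F t b i ∈ freeIndices F t b :=
  Nat.nth_mem_of_lt_card (freeIndices F t b).finite_toSet
    (by rw [finite_toSet_toFinset]; exact hi.trans_le (le_card_freeIndices hF hb))

lemma filler_injOn {b : ℕ} (hb : UsableBlock F t b) : Set.InjOn (filler F t b) (Set.Iio n) :=
  (Nat.nth_injOn (freeIndices F t b).finite_toSet).mono fun _ hi => by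
    rw [finite_toSet_toFinset]
    exact (Set.mem_Iio.1 hi).trans_le (le_card_freeIndices hF hb)

lemma apply_filler_ne_anchor {b i : ℕ} (hb : UsableBlock F t b) (hi : i < n) :
    F (filler F t b i) ≠ F 0 :=
  (mem_freeIndices.1 (filler_mem_freeIndices hF hb hi)).2.1

lemma apply_ne_apply_filler {b i : ℕ} (hb : UsableBlock F t b) (hi : i < n) (j : Fin n) :
    t j ≠ F (filler F t b i) :=
  (mem_freeIndices.1 (filler_mem_freeIndices hF hb hi)).2.2 j

lemma eq_of_apply_filler_eq {t' : Fin n → x} {b b' i j : ℕ} (hb : UsableBlock F t b)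
    (hb' : UsableBlock F t' b') (hi : i < n) (hj : j < n)
    (h : F (filler F t b i) = F (filler F t' b' j)) :
    b = b' ∧ filler F t b i = filler F t' b' j :=
  eq_of_apply_eq_of_mem_block hF hb.1 hb'.1
    (mem_freeIndices.1 (filler_mem_freeIndices hF hb hi)).1
    (mem_freeIndices.1 (filler_mem_freeIndices hF hb' hj)).1 h

lemma filler_inj {b b' i j : ℕ} (hb : UsableBlock F t b) (hb' : UsableBlock F t b')
    (hi : i < n) (hj : j < n) (h : F (filler F t b i) = F (filler F t b' j)) :
    b = b' ∧ i = j := by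
  obtain ⟨rfl, e⟩ := eq_of_apply_filler_eq hF hb hb' hi hj h
  exact ⟨rfl, filler_injOn hF hb hi hj e⟩

lemma valueSlot_ne_anchor (i : Fin n) : valueSlot F t i ≠ F 0 := by
  unfold valueSlot
  split_ifs with h
  · exact (tag_eq_one_iff.1 h).1
  · exact apply_filler_ne_anchor hF (usableBlock_one i.pos) i.isLt

lemma tagSlot_ne_anchor (i : Fin n) : tagSlot F t i ≠ F 0 :=
  apply_filler_ne_anchor hF (usableBlock_tag i) i.isLt

lemma valueSlot_injective : Function.Injective (valueSlot F t) := by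
  intro i j h
  have hone := usableBlock_one (F := F) (t := t) i.pos
  unfold valueSlot at h
  split_ifs at h with hi hj hj
  · rw [← (tag_eq_one_iff.1 hi).2, ← (tag_eq_one_iff.1 hj).2, firstIndex_congr h]
  · exact absurd h (apply_ne_apply_filler hF hone j.isLt i)
  · exact absurd h.symm (apply_ne_apply_filler hF hone i.isLt j)
  · exact Fin.ext (filler_inj hF hone hone i.isLt j.isLt h).2

lemma tagSlot_injective : Function.Injective (tagSlot F t) := fun i j h =>
  Fin.ext (filler_inj hF (usableBlock_tag i) (usableBlock_tag j) i.isLt j.isLt h).2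

lemma valueSlot_ne_tagSlot (i j : Fin n) : valueSlot F t i ≠ tagSlot F t j := by
  unfold valueSlot
  split_ifs with hi
  · exact apply_ne_apply_filler hF (usableBlock_tag j) j.isLt i
  · intro h
    obtain ⟨h1, hij⟩ :=
      filler_inj hF (usableBlock_one i.pos) (usableBlock_tag j) i.isLt j.isLt h
    rw [Fin.ext hij] at hi
    exact hi h1.symm

lemma nodup_cycleList : (cycleList F t).Nodup := by
  simp only [cycleList, List.nodup_cons, List.mem_append, List.mem_ofFn, List.nodup_append,
    List.nodup_ofFn]
  refine ⟨?_, valueSlot_injective hF, tagSlot_injective hF, ?_⟩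
  · rintro (⟨i, h⟩ | ⟨i, h⟩)
    exacts [valueSlot_ne_anchor hF i h, tagSlot_ne_anchor hF i h]
  · rintro _ ⟨i, rfl⟩ _ ⟨j, rfl⟩
    exact valueSlot_ne_tagSlot hF i j

lemma tag_eq_of_tagSlot_eq {t' : Fin n → x} {i : Fin n}
    (h : tagSlot F t i = tagSlot F t' i) : tag F t i = tag F t' i :=
  (eq_of_apply_filler_eq hF (usableBlock_tag i) (usableBlock_tag i) i.isLt i.isLt h).1

lemma eq_of_slots_eq {t' : Fin n → x} (hv : valueSlot F t = valueSlot F t')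
    (hz : tagSlot F t = tagSlot F t') : t = t' := by
  funext i
  have htag := tag_eq_of_tagSlot_eq hF (congrFun hz i)
  by_cases h0 : t i = F 0
  · rw [h0, eq_comm, ← tag_eq_zero_iff, ← htag, tag_eq_zero_iff, h0]
  have h0' : t' i ≠ F 0 := by rwa [Ne, ← tag_eq_zero_iff, ← htag, tag_eq_zero_iff]
  have hfirst : firstIndex t i = firstIndex t' i :=
    Fin.ext (by rw [firstIndex_val_eq h0, firstIndex_val_eq h0', htag])
  calc t i = valueSlot F t (firstIndex t i) := (valueSlot_firstIndex h0).symm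
    _ = valueSlot F t' (firstIndex t' i) := by rw [hv, hfirst]
    _ = t' i := valueSlot_firstIndex h0'

lemma injective_formPerm_cycleList :
    Function.Injective fun t : Fin n → x => (cycleList F t).formPerm := by
  intro t t' h
  have hslots := List.eq_of_formPerm_cons_eq_s12 (nodup_cycleList hF) (nodup_cycleList hF)
    (by simp) h
  obtain ⟨hv, hz⟩ := List.append_inj hslots (by simp)
  exact eq_of_slots_eq hF (List.ofFn_injective hv) (List.ofFn_injective hz)

end

end CycleEncoding

open CycleEncoding

/-- For `n ≥ 1`, any set `x`, and any injection `f : 2n(n+1) → x`, one can construct an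
injection from `xⁿ` into the set of permutations of `x` moving exactly `2n+1` elements. -/
theorem powers_inject_into_perms {x : Type*} (n : ℕ) (hn : 1 ≤ n)
    (f : Fin (2 * n * (n + 1)) → x) (hf : Function.Injective f) :
    ∃ g : (Fin n → x) → {p : Equiv.Perm x // {z | p z ≠ z}.ncard = 2 * n + 1},
      Function.Injective g := by
  classical
  have hN : 0 < 2 * n * (n + 1) := Nat.mul_pos (by omega) n.succ_pos
  let F : ℕ → x := fun k => f ⟨k % (2 * n * (n + 1)), Nat.mod_lt _ hN⟩
  have hF : Set.InjOn F (Set.Iio (2 * n * (n + 1))) := fun a ha b hb h => by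
    simpa [F, Nat.mod_eq_of_lt ha, Nat.mod_eq_of_lt hb] using hf h
  have hcard (t : Fin n → x) : {z | (cycleList F t).formPerm z ≠ z}.ncard = 2 * n + 1 := by
    rw [List.ncard_setOf_formPerm_apply_ne (nodup_cycleList hF)
      (by rw [length_cycleList]; omega), length_cycleList]
  exact ⟨fun t => ⟨_, hcard t⟩, fun t t' h =>
    injective_formPerm_cycleList hF (congrArg Subtype.val h)⟩
end

section
/- For every Dedekind infinite set x (i.e., a set admitting an injection from ω), there is an injection from seq(x), the set of all finite sequences over x, into S_fin(x), the set of finitary permutations of x. -/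
/-- For every Dedekind infinite set `x` there is an injection from the finite sequences
over `x` into the finitary permutations of `x`. -/
theorem seq_inject_into_finitary_perms {x : Type*} (f : ℕ → x)
    (hf : Function.Injective f) :
    ∃ g : List x → {p : Equiv.Perm x // {z | p z ≠ z}.Finite},
      Function.Injective g := by
  have hinf : Infinite x := Infinite.of_injective f hf
  classical
  obtain ⟨e⟩ : Nonempty (List x ↪ x) :=
    Cardinal.le_def _ _ |>.mp (Cardinal.mk_list_eq_mk x).le
  refine ⟨fun l => ⟨Equiv.swap (f 0) (e l), ?_⟩, ?_⟩
  · refine Set.Finite.subset ((Set.finite_singleton (e l)).insert (f 0)) ?_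
    intro z hz
    by_contra hmem
    simp only [Set.mem_insert_iff, Set.mem_singleton_iff, not_or] at hmem
    exact hz (Equiv.swap_apply_of_ne_of_ne hmem.1 hmem.2)
  · intro l1 l2 h
    apply e.injective
    have := congrArg (fun p : {p : Equiv.Perm x // {z | p z ≠ z}.Finite} => (p : Equiv.Perm x) (f 0)) h
    simpa using this
end

section
/- Let x be a set and let f, g be permutations of x each moving only finitely many elements (more generally, with all orbits finite). Then one can construct a permutation h of x whose moved set equals mov(f) ∪ mov(g). -/
/-- Given permutations `f` and `g` of `x` each moving only finitely many elements, one
can construct a permutation `h` of `x` whose moved set is `mov(f) ∪ mov(g)`. -/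
theorem union_of_moved_sets {x : Type*} (f g : Equiv.Perm x)
    (hf : {z | f z ≠ z}.Finite) (hg : {z | g z ≠ z}.Finite) :
    ∃ h : Equiv.Perm x, {z | h z ≠ z} = {z | f z ≠ z} ∪ {z | g z ≠ z} := by
  classical
  set S : Set x := {z | f z ≠ z} ∪ {z | g z ≠ z} with hS
  rcases S.eq_empty_or_nonempty with he | ⟨a, ha⟩
  · exact ⟨1, by simp [he]⟩
  · have hSnt : S.Nontrivial := by
      have key : ∀ (p : Equiv.Perm x) (z : x), p z ≠ z → z ∈ S → S.Nontrivial := by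
        intro p z hz hzS
        have h1 : p z ∈ {w | p w ≠ w} := by
          simp only [Set.mem_setOf_eq]
          intro hpp
          exact hz (p.injective hpp)
        rcases hzS with hzf | hzg
        · exact ⟨f z, Or.inl (by simpa using fun h => hzf (f.injective h)), z, Or.inl hzf, hzf⟩
        · exact ⟨g z, Or.inr (by simpa using fun h => hzg (g.injective h)), z, Or.inr hzg, hzg⟩
      rcases ha with haf | hag
      · exact key f a haf (Or.inl haf)
      · exact key g a hag (Or.inr hag)
    obtain ⟨h, hc, hsub⟩ := ((hf.union hg).countable).exists_cycleOn
    refine ⟨h, Set.Subset.antisymm hsub fun z hz => ?_⟩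
    exact hc.apply_ne hSnt hz
end

section
/- Let x be a nonempty set equipped with a linear order r. Then there is an injection from S_fin(x), the set of finitary permutations of x, into seq¹⁻¹(x), the set of injective finite sequences over x; moreover this injection is not surjective (e.g., no sequence of length 1 is in its range). -/
/-- For a nonempty linearly ordered set `x`, there is a non-surjective injection from the
finitary permutations of `x` into the injective finite sequences over `x`; in fact no
sequence of length 1 is in its range. -/
theorem finitary_perms_inject_into_injective_seq {x : Type*} [Nonempty x] [LinearOrder x] :
    ∃ F : {p : Equiv.Perm x // {z | p z ≠ z}.Finite} → {l : List x // l.Nodup},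
      Function.Injective F ∧
      ∀ l : {l : List x // l.Nodup}, l.val.length = 1 → l ∉ Set.range F := by
  classical
  -- membership of image of support
  have hmem : ∀ (p : Equiv.Perm x) (hp : {z | p z ≠ z}.Finite) (z : x),
      p z ∈ hp.toFinset ↔ z ∈ hp.toFinset := by
    intro p hp z
    simp only [Set.Finite.mem_toFinset, Set.mem_setOf_eq]
    constructor
    · intro h
      intro hz
      exact h (by rw [hz, hz])
    · intro h hc
      exact h (p.injective hc)
  have himg : ∀ (p : Equiv.Perm x) (hp : {z | p z ≠ z}.Finite),
      hp.toFinset.image p = hp.toFinset := by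
    intro p hp
    apply Finset.ext
    intro a
    simp only [Finset.mem_image]
    constructor
    · rintro ⟨b, hb, rfl⟩
      exact (hmem p hp b).2 hb
    · intro ha
      exact ⟨p.symm a, by rw [← hmem p hp, Equiv.apply_symm_apply]; exact ha,
        Equiv.apply_symm_apply _ _⟩
  refine ⟨fun p => ⟨(p.2.toFinset.sort (· ≤ ·)).map p.1, ?_⟩, ?_, ?_⟩
  · exact (Finset.sort_nodup _ _).map p.1.injective
  · rintro ⟨p, hp⟩ ⟨q, hq⟩ h
    simp only [Subtype.mk.injEq] at h
    -- supports are equal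
    have hsupp : hp.toFinset = hq.toFinset := by
      have h1 : (hp.toFinset.sort (· ≤ ·)).map p = (hq.toFinset.sort (· ≤ ·)).map q := h
      have h2 : hp.toFinset.image p = hq.toFinset.image q := by
        apply Finset.ext
        intro a
        have e1 : a ∈ hp.toFinset.image p ↔ a ∈ (hp.toFinset.sort (· ≤ ·)).map p := by
          simp [Finset.mem_image, List.mem_map, Finset.mem_sort]
        have e2 : a ∈ hq.toFinset.image q ↔ a ∈ (hq.toFinset.sort (· ≤ ·)).map q := by
          simp [Finset.mem_image, List.mem_map, Finset.mem_sort]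
        rw [e1, e2, h1]
      rwa [himg p hp, himg q hq] at h2
    have hsort : hp.toFinset.sort (· ≤ ·) = hq.toFinset.sort (· ≤ ·) := by rw [hsupp]
    rw [hsort] at h
    have hagree : ∀ a ∈ hq.toFinset.sort (· ≤ ·), p a = q a := by
      intro a ha
      exact List.map_eq_map_iff.mp h a ha
    have : p = q := by
      apply Equiv.ext
      intro z
      by_cases hz : z ∈ hq.toFinset
      · exact hagree z ((Finset.mem_sort _).2 hz)
      · have hz' : z ∉ hp.toFinset := by rw [hsupp]; exact hz
        simp only [Set.Finite.mem_toFinset, Set.mem_setOf_eq, not_not] at hz hz'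
        rw [hz, hz']
    simp [this]
  · rintro ⟨l, hl⟩ hlen ⟨⟨p, hp⟩, hF⟩
    simp only [Subtype.mk.injEq] at hF
    have hcard : hp.toFinset.card = 1 := by
      have := congrArg List.length hF
      simpa [hlen] using this
    obtain ⟨a, ha⟩ := Finset.card_eq_one.mp hcard
    have ha1 : a ∈ hp.toFinset := by rw [ha]; exact Finset.mem_singleton_self a
    have ha2 : p a ∈ hp.toFinset := (hmem p hp a).2 ha1
    rw [ha, Finset.mem_singleton] at ha2
    have : p a ≠ a := by simpa using ha1
    exact this ha2
end

section
/- Let ⟨P,<⟩ be a locally finite partially ordered set with a least element, satisfying the finitary lower covering condition. Then the Jordan–Dedekind chain condition holds: for all a ≤ b in P, all saturated chains from a to b have the same length. -/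
/-!
First consider saturated chains starting at `⊥`, by well-founded induction on their top `b`.
Two such chains end in coverings `x ⋖ b` and `y ⋖ b`. If `x = y`, the induction hypothesis at
`x` applies. Otherwise the lower covering condition gives `c ⋖ x` and `c ⋖ y`; extending a
saturated chain from `⊥` to `c` through `x` and through `y` shows that both chains have length
one more than that chain. Starting at `⊥` matters because `c` need not lie above a general
starting point `a`; chains from `a` are handled by putting a fixed chain from `⊥` to `a` in front.
-/

section

variable {P : Type*}

/-- `n` counts covering steps, one less than the number of elements of the chain. -/
inductive SatChain [Preorder P] (a : P) : P → ℕ → Prop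
  | refl : SatChain a a 0
  | snoc {b c : P} {n : ℕ} : SatChain a b n → b ⋖ c → SatChain a c (n + 1)

namespace SatChain

section Preorder

variable [Preorder P] {a b c : P} {m n : ℕ}

theorem le (h : SatChain a b n) : a ≤ b := by
  induction h with
  | refl => exact le_rfl
  | snoc _ hbc ih => exact ih.trans hbc.le

theorem trans (hab : SatChain a b m) (hbc : SatChain b c n) : SatChain a c (m + n) := by
  induction hbc with
  | refl => exact hab
  | snoc _ hcd ih => exact ih.snoc hcd

theorem cons (hab : a ⋖ b) (hbc : SatChain b c n) : SatChain a c (n + 1) := by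
  simpa [add_comm] using (refl.snoc hab).trans hbc

theorem of_isChain {t : List P} (ht : t.IsChain (· ⋖ ·)) (ha : t.head? = some a)
    (hb : t.getLast? = some b) : SatChain a b (t.length - 1) := by
  induction ht generalizing a with
  | nil => simp at ha
  | singleton x =>
    simp only [List.head?_cons, List.getLast?_singleton, Option.some.injEq] at ha hb
    subst ha hb
    exact refl
  | cons_cons hxy _ ih =>
    simp only [List.head?_cons, Option.some.injEq] at ha
    subst ha
    simpa using cons hxy (ih rfl (by simpa [List.getLast?_cons_cons] using hb))

end Preorder

theorem eq_zero_of_self [PartialOrder P] {a : P} {n : ℕ} (h : SatChain a a n) : n = 0 := by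
  cases h with
  | refl => rfl
  | snoc h hxa => exact absurd (h.le.trans_lt hxa.lt) (lt_irrefl a)

end SatChain

theorem exists_satChain [PartialOrder P] [WellFoundedLT P] [IsStronglyCoatomic P] {a b : P}
    (hab : a ≤ b) : ∃ n, SatChain a b n := by
  induction b using WellFoundedLT.induction with
  | _ b ih =>
    rcases hab.eq_or_lt with rfl | hlt
    · exact ⟨0, .refl⟩
    · obtain ⟨x, hax, hxb⟩ := exists_le_covBy_of_lt hlt
      obtain ⟨n, hn⟩ := ih x hxb.lt hax
      exact ⟨n + 1, hn.snoc hxb⟩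

section LowerCovering

variable [PartialOrder P] [WellFoundedLT P] [IsStronglyCoatomic P]
  (hcov : ∀ ⦃x y b : P⦄, x ≠ y → x ⋖ b → y ⋖ b → ∃ c, c ⋖ x ∧ c ⋖ y)
include hcov

theorem SatChain.length_eq_of_bot [OrderBot P] {b : P} {m n : ℕ}
    (hm : SatChain ⊥ b m) (hn : SatChain ⊥ b n) : m = n := by
  induction b using WellFoundedLT.induction generalizing m n with
  | _ b ih =>
    cases hm with
    | refl => exact hn.eq_zero_of_self.symm
    | @snoc x _ m hx hxb =>
      cases hn with
      | refl => exact (hx.snoc hxb).eq_zero_of_self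
      | @snoc y _ n hy hyb =>
        by_cases hxy : x = y
        · subst hxy
          rw [ih x hxb.lt hx hy]
        · obtain ⟨c, hcx, hcy⟩ := hcov hxy hxb hyb
          obtain ⟨k, hk⟩ := exists_satChain (bot_le : ⊥ ≤ c)
          rw [ih x hxb.lt hx (hk.snoc hcx), ih y hyb.lt hy (hk.snoc hcy)]

theorem SatChain.length_eq [OrderBot P] {a b : P} {m n : ℕ}
    (hm : SatChain a b m) (hn : SatChain a b n) : m = n := by
  obtain ⟨k, hk⟩ := exists_satChain (bot_le : ⊥ ≤ a)
  have := (hk.trans hm).length_eq_of_bot hcov (hk.trans hn)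
  omega

end LowerCovering

theorem LocallyFiniteOrder.wellFoundedLT_of_orderBot [Preorder P] [LocallyFiniteOrder P]
    [OrderBot P] : WellFoundedLT P :=
  ⟨Set.wellFoundedOn_univ.mp (OrderBot.bddBelow _).wellFoundedOn_lt⟩

theorem exists_covBy_covBy_of_covBy_of_ne [Preorder P]
    (hcov : ∀ M : Finset P, 2 ≤ M.card → (∃ b, ∀ a ∈ M, a ⋖ b) → ∃ c, ∀ a ∈ M, c ⋖ a)
    {x y b : P} (hxy : x ≠ y) (hxb : x ⋖ b) (hyb : y ⋖ b) : ∃ c, c ⋖ x ∧ c ⋖ y := by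
  classical
  obtain ⟨c, hc⟩ := hcov {x, y} (Finset.card_pair hxy).ge ⟨b, by simp [hxb, hyb]⟩
  exact ⟨c, hc x (by simp), hc y (by simp)⟩

end

theorem jordan_dedekind_general {P : Type*} [PartialOrder P] [OrderBot P]
    (hlf : ∀ a b : P, {c | a ≤ c ∧ c ≤ b}.Finite)
    (hcov : ∀ M : Finset P, 2 ≤ M.card →
      (∃ b, ∀ a ∈ M, a ⋖ b) → ∃ c, ∀ a ∈ M, c ⋖ a)
    (a b : P)
    (t u : List P)
    (ht : t.Chain' (· ⋖ ·)) (hu : u.Chain' (· ⋖ ·))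
    (hta : t.head? = some a) (htb : t.getLast? = some b)
    (hua : u.head? = some a) (hub : u.getLast? = some b) :
    t.length = u.length := by
  let := LocallyFiniteOrder.ofFiniteIcc hlf
  have : WellFoundedLT P := LocallyFiniteOrder.wellFoundedLT_of_orderBot
  have hlen := (SatChain.of_isChain ht hta htb).length_eq
    (fun _ _ _ ↦ exists_covBy_covBy_of_covBy_of_ne hcov) (SatChain.of_isChain hu hua hub)
  have ht₀ : 0 < t.length := List.length_pos_of_ne_nil (by rintro rfl; simp at hta)
  have hu₀ : 0 < u.length := List.length_pos_of_ne_nil (by rintro rfl; simp at hua)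
  omega

/-- Jordan–Dedekind chain condition: in a locally finite poset with a least element
satisfying the finitary lower covering condition, any two saturated chains between the
same endpoints `a ≤ b` have the same length. -/
theorem jordan_dedekind {P : Type*} [PartialOrder P] [OrderBot P]
    (hlf : ∀ a b : P, {c | a ≤ c ∧ c ≤ b}.Finite)
    (hcov : ∀ M : Finset P, 2 ≤ M.card →
      (∃ b, ∀ a ∈ M, a ⋖ b) → ∃ c, ∀ a ∈ M, c ⋖ a)
    (a b : P) (hab : a ≤ b)
    (t u : List P)
    (ht : t.Chain' (· ⋖ ·)) (hu : u.Chain' (· ⋖ ·))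
    (hta : t.head? = some a) (htb : t.getLast? = some b)
    (hua : u.head? = some a) (hub : u.getLast? = some b) :
    t.length = u.length :=
  jordan_dedekind_general hlf hcov a b t u ht hu hta htb hua hub
end

section
/- Let ⟨P,<⟩ be a locally finite lattice with a least element satisfying the finitary lower covering condition, and let a < b in P with a not ≤ inf(cov(b)), where cov(b) is the set of elements covered by b. Then there is a unique saturated chain in the interval [a,b]. -/
/-!
If `c ≠ d` are both covered by `b`, the lower covering condition applied to `{c, d, e}` yields an
element covered by all three; lying below `c ⊓ d < c` and covered by `c`, it must be `c ⊓ d`. So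
`c ⊓ d ⋖ c`, and `c ⊓ d ≤ e` for every `e ⋖ b`. Now `a ≰ inf cov(b)` means that `a ≰ d` for some
`d ⋖ b`; then at most one `c ⋖ b` lies above `a`, so every saturated chain from `a` to `b` ends
with the step `c ⋖ b`. Moreover `a ≰ c ⊓ d ⋖ c`, so the hypothesis passes to `[a, c]`, and
induction on the size of the interval finishes the proof.
-/

open Set

section SaturatedChains

variable {P : Type*}

def IsSaturatedChain [Preorder P] (a b : P) (t : List P) : Prop :=
  t.IsChain (· ⋖ ·) ∧ t.head? = some a ∧ t.getLast? = some b

section PartialOrder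

variable [PartialOrder P] {a b c : P} {s t : List P}

theorem IsSaturatedChain.le (h : IsSaturatedChain a b t) : a ≤ b := by
  obtain ⟨hchain, hhead, hlast⟩ := h
  obtain ⟨l, rfl⟩ := List.head?_eq_some_iff.mp hhead
  exact hchain.induction (a ≤ ·) _ (fun _ _ hxy hx => hx.trans hxy.le) (fun _ => le_rfl) b
    (List.mem_of_getLast? hlast)

theorem existsUnique_isSaturatedChain_self (a : P) : ∃! t, IsSaturatedChain a a t := by
  refine ⟨[a], ⟨.singleton a, rfl, rfl⟩, fun t ⟨hchain, hhead, hlast⟩ => ?_⟩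
  obtain ⟨l, rfl⟩ := List.head?_eq_some_iff.mp hhead
  cases l with
  | nil => rfl
  | cons c l =>
    have hac : a ⋖ c := List.isChain_cons_cons.mp hchain |>.1
    have hca : c ≤ a :=
      IsSaturatedChain.le ⟨(List.isChain_cons_cons.mp hchain).2, rfl, by simpa using hlast⟩
    exact absurd hca hac.lt.not_ge

theorem IsSaturatedChain.append_singleton (h : IsSaturatedChain a c s) (hcb : c ⋖ b) :
    IsSaturatedChain a b (s ++ [b]) := by
  obtain ⟨hchain, hhead, hlast⟩ := h
  have hs : s ≠ [] := by rintro rfl; simp at hhead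
  refine ⟨List.isChain_append.mpr ⟨hchain, .singleton b, ?_⟩, ?_, List.getLast?_concat⟩
  · simp [hlast, hcb]
  · rwa [List.head?_append_of_ne_nil _ hs]

theorem IsSaturatedChain.exists_eq_append_singleton (h : IsSaturatedChain a b t) (hab : a ≠ b) :
    ∃ c s, IsSaturatedChain a c s ∧ c ⋖ b ∧ t = s ++ [b] := by
  obtain ⟨hchain, hhead, hlast⟩ := h
  obtain ⟨s, rfl⟩ := List.getLast?_eq_some_iff.mp hlast
  have hs : s ≠ [] := by rintro rfl; simp_all
  obtain ⟨c, hc⟩ := Option.isSome_iff_exists.mp (List.getLast?_isSome.mpr hs)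
  obtain ⟨hschain, -, hcb⟩ := List.isChain_append.mp hchain
  refine ⟨c, s, ⟨hschain, ?_, hc⟩, hcb c hc b rfl, rfl⟩
  rwa [List.head?_append_of_ne_nil _ hs] at hhead

theorem existsUnique_isSaturatedChain_of_covBy (hab : a ≠ b) (hcb : c ⋖ b)
    (huniq : ∀ d, a ≤ d → d ⋖ b → d = c) (hs : ∃! s, IsSaturatedChain a c s) :
    ∃! t, IsSaturatedChain a b t := by
  obtain ⟨s, hs, hsuniq⟩ := hs
  refine ⟨s ++ [b], hs.append_singleton hcb, fun t ht => ?_⟩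
  obtain ⟨d, s', hs', hdb, rfl⟩ := ht.exists_eq_append_singleton hab
  obtain rfl := huniq d hs'.le hdb
  rw [hsuniq s' hs']

theorem exists_le_covBy_of_finite_Icc (hfin : (Icc a b).Finite) (hab : a < b) :
    ∃ c, a ≤ c ∧ c ⋖ b := by
  obtain ⟨c, hc⟩ := (hfin.subset Ico_subset_Icc_self).exists_maximal ⟨a, le_rfl, hab⟩
  refine ⟨c, hc.prop.1, hc.prop.2, fun d hcd hdb => hcd.not_ge ?_⟩
  exact hc.le_of_ge ⟨hc.prop.1.trans hcd.le, hdb⟩ hcd.le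

end PartialOrder

def FinitaryLowerCovering (P : Type*) [Preorder P] : Prop :=
  ∀ M : Finset P, 2 ≤ M.card → (∃ b, ∀ a ∈ M, a ⋖ b) → ∃ c, ∀ a ∈ M, c ⋖ a

namespace FinitaryLowerCovering

variable [Lattice P] {a b c d e : P}

theorem inf_covBy_of_mem (hP : FinitaryLowerCovering P) {M : Finset P} (hM : ∀ x ∈ M, x ⋖ b)
    (hc : c ∈ M) (hd : d ∈ M) (hcd : c ≠ d) : ∀ x ∈ M, c ⊓ d ⋖ x := by
  obtain ⟨e, he⟩ := hP M (Finset.one_lt_card.mpr ⟨c, hc, d, hd, hcd⟩) ⟨b, hM⟩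
  have hlt : c ⊓ d < c :=
    inf_lt_left.mpr fun hle => (hM c hc).2 (hle.lt_of_ne hcd) (hM d hd).lt
  have hecd : e ≤ c ⊓ d := le_inf (he c hc).le (he d hd).le
  obtain heq | heq := (he c hc).eq_or_eq hecd inf_le_left
  · exact heq ▸ he
  · exact absurd heq hlt.ne

theorem inf_covBy_left (hP : FinitaryLowerCovering P) (hc : c ⋖ b) (hd : d ⋖ b) (hcd : c ≠ d) :
    c ⊓ d ⋖ c := by
  classical
  exact hP.inf_covBy_of_mem (b := b) (M := {c, d}) (by simp [hc, hd]) (by simp) (by simp) hcd c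
    (by simp)

theorem inf_le_of_covBy (hP : FinitaryLowerCovering P) (hc : c ⋖ b) (hd : d ⋖ b) (hcd : c ≠ d)
    (he : e ⋖ b) : c ⊓ d ≤ e := by
  classical
  exact (hP.inf_covBy_of_mem (b := b) (M := {c, d, e}) (by simp [hc, hd, he]) (by simp) (by simp)
    hcd e (by simp)).le

theorem covBy_eq_of_le (hP : FinitaryLowerCovering P) (hdb : d ⋖ b) (had : ¬ a ≤ d)
    (hcb : c ⋖ b) (hac : a ≤ c) (heb : e ⋖ b) (hae : a ≤ e) : e = c := by
  by_contra hec
  exact had ((le_inf hae hac).trans (hP.inf_le_of_covBy heb hcb hec hdb))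

end FinitaryLowerCovering

theorem existsUnique_isSaturatedChain [Lattice P] (hfin : ∀ a b : P, (Icc a b).Finite)
    (hP : FinitaryLowerCovering P) {a b d : P} (hab : a < b) (hdb : d ⋖ b) (had : ¬ a ≤ d) :
    ∃! t, IsSaturatedChain a b t := by
  induction b using (measure fun b => (Icc a b).ncard).wf.induction generalizing d with
  | _ b ih =>
    obtain ⟨c, hac, hcb⟩ := exists_le_covBy_of_finite_Icc (hfin a b) hab
    refine existsUnique_isSaturatedChain_of_covBy hab.ne hcb
      (fun e hae heb => hP.covBy_eq_of_le hdb had hcb hac heb hae) ?_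
    obtain rfl | hac := hac.eq_or_lt
    · exact existsUnique_isSaturatedChain_self a
    have hcd : c ≠ d := fun h => had (h ▸ hac.le)
    have hsmaller : (Icc a c).ncard < (Icc a b).ncard :=
      ncard_lt_ncard (Icc_ssubset_Icc_right hab.le le_rfl hcb.lt) (hfin a b)
    exact ih c hsmaller hac (hP.inf_covBy_left hcb hdb hcd) fun h => had (h.trans inf_le_right)

end SaturatedChains

theorem unique_saturated_chain_general {P : Type*} [Lattice P]
    (hlf : ∀ a b : P, {c | a ≤ c ∧ c ≤ b}.Finite)
    (hcov : ∀ M : Finset P, 2 ≤ M.card →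
      (∃ b, ∀ a ∈ M, a ⋖ b) → ∃ c, ∀ a ∈ M, c ⋖ a)
    (a b m : P) (hab : a < b) (hm : IsGLB {c | c ⋖ b} m) (ham : ¬ a ≤ m) :
    ∃! t : List P, t.Chain' (· ⋖ ·) ∧ t.head? = some a ∧ t.getLast? = some b := by
  obtain ⟨d, hdb, had⟩ : ∃ d, d ⋖ b ∧ ¬ a ≤ d := by
    by_contra! h
    exact ham (hm.2 h)
  exact existsUnique_isSaturatedChain hlf hcov hab hdb had

/-- In a locally finite lattice with a least element satisfying the finitary lower
covering condition, if `a < b` and `a` is not below `inf(cov(b))`, then there is a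
unique saturated chain in the interval `[a, b]`. -/
theorem unique_saturated_chain {P : Type*} [Lattice P] [OrderBot P]
    (hlf : ∀ a b : P, {c | a ≤ c ∧ c ≤ b}.Finite)
    (hcov : ∀ M : Finset P, 2 ≤ M.card →
      (∃ b, ∀ a ∈ M, a ⋖ b) → ∃ c, ∀ a ∈ M, c ⋖ a)
    (a b m : P) (hab : a < b) (hm : IsGLB {c | c ⋖ b} m) (ham : ¬ a ≤ m) :
    ∃! t : List P, t.Chain' (· ⋖ ·) ∧ t.head? = some a ∧ t.getLast? = some b :=
  unique_saturated_chain_general hlf hcov a b m hab hm ham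
end
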